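/- The formal power series G(x) = Σ_{n≥0} av_{t73}(n) x^n (with integer or rational coefficients) satisfies the functional equation x·G(x)^4 + x·G(x)^2 − G(x) + x = 0. -/

import Mathlib

inductive TTree : Type
  | L : TTree
  | N : TTree → TTree → TTree → TTree

namespace TTree

/-- `occursAtRoot t T` : the pattern `t` occurs at the root of `T`. -/
def occursAtRoot : TTree → TTree → Prop
  | .L, _ => True
  | .N _ _ _, .L => False
  | .N p q r, .N a b c => occursAtRoot p a ∧ occursAtRoot q b ∧ occursAtRoot r c

/-- `contains t T` : the pattern `t` occurs at some vertex of `T`. -/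
def contains (t : TTree) : TTree → Prop
  | .L => occursAtRoot t .L
  | .N a b c => occursAtRoot t (.N a b c) ∨ contains t a ∨ contains t b ∨ contains t c

/-- `T.avoids t` : the tree `T` avoids the pattern `t`. -/
def avoids (T t : TTree) : Prop := ¬ contains t T

/-- the number of leaves of a ternary tree -/
def leaves : TTree → ℕ
  | .L => 1
  | .N a b c => leaves a + leaves b + leaves c

end TTree

/-- `av t n` : the number of `n`-leaf ternary trees avoiding the pattern `t` -/
noncomputable def av (t : TTree) (n : ℕ) : ℕ :=
  Set.ncard {T : TTree | T.leaves = n ∧ T.avoids t}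

/-- the 7-leaf pattern `t73 = N(N(N(L,L,L),L,L),L,L)` -/
def t73 : TTree := .N (.N (.N .L .L .L) .L .L) .L .L

deriving instance DecidableEq for TTree

instance instDecOcc : ∀ t T, Decidable (TTree.occursAtRoot t T)
  | .L, _ => .isTrue trivial
  | .N _ _ _, .L => .isFalse fun h => h
  | .N p q r, .N a b c =>
    have h1 := instDecOcc p a
    have h2 := instDecOcc q b
    have h3 := instDecOcc r c
    instDecidableAnd

instance instDecContains : ∀ t T, Decidable (TTree.contains t T)
  | t, .L => instDecOcc t .L
  | t, .N a b c =>
    have h0 := instDecOcc t (.N a b c)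
    have h1 := instDecContains t a
    have h2 := instDecContains t b
    have h3 := instDecContains t c
    instDecidableOr

instance (T t : TTree) : Decidable (T.avoids t) := instDecidableNot

open TTree Finset

lemma one_le_leaves (T : TTree) : 1 ≤ T.leaves := by
  induction T <;> simp [TTree.leaves] <;> omega

def treesLe : ℕ → Finset TTree
  | 0 => ∅
  | n+1 => insert .L (((treesLe n) ×ˢ (treesLe n) ×ˢ (treesLe n)).image
      fun p => .N p.1 p.2.1 p.2.2)

lemma mem_treesLe {T : TTree} : ∀ {n : ℕ}, T.leaves ≤ n → T ∈ treesLe n := by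
  induction T with
  | L => intro n h
         match n, h with
         | n+1, _ => simp [treesLe]
  | N a b c iha ihb ihc =>
    intro n h
    have ha := one_le_leaves a; have hb := one_le_leaves b; have hc := one_le_leaves c
    simp [TTree.leaves] at h
    obtain ⟨m, rfl⟩ : ∃ m, n = m + 1 := ⟨n - 1, by omega⟩
    · simp only [treesLe, Finset.mem_insert, Finset.mem_image, Finset.mem_product]
      right
      exact ⟨(a, b, c), ⟨iha (by omega), ihb (by omega), ihc (by omega)⟩, rfl⟩

def F (n : ℕ) : Finset TTree := (treesLe n).filter fun T => T.leaves = n ∧ T.avoids t73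

lemma mem_F {T : TTree} {n : ℕ} : T ∈ F n ↔ T.leaves = n ∧ T.avoids t73 := by
  simp only [F, Finset.mem_filter, and_iff_right_iff_imp]
  rintro ⟨h, -⟩
  exact mem_treesLe h.le

lemma av_eq (n : ℕ) : av t73 n = (F n).card := by
  have : {T : TTree | T.leaves = n ∧ T.avoids t73} = ↑(F n) := by
    ext T; simp [mem_F]
  rw [av, this, Set.ncard_coe_finset]

def P2 (n : ℕ) : Finset (TTree × TTree) :=
  (antidiagonal n).biUnion fun p => F p.1 ×ˢ F p.2

def P4 (n : ℕ) : Finset ((TTree × TTree) × (TTree × TTree)) :=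
  (antidiagonal n).biUnion fun p => P2 p.1 ×ˢ P2 p.2

lemma mem_P2 {x : TTree × TTree} {n : ℕ} :
    x ∈ P2 n ↔ x.1.avoids t73 ∧ x.2.avoids t73 ∧ x.1.leaves + x.2.leaves = n := by
  simp only [P2, Finset.mem_biUnion, Finset.mem_product, Finset.HasAntidiagonal.mem_antidiagonal, mem_F, Prod.exists]
  constructor
  · rintro ⟨i, j, rfl, ⟨rfl, h1⟩, rfl, h2⟩
    exact ⟨h1, h2, rfl⟩
  · rintro ⟨h1, h2, rfl⟩
    exact ⟨_, _, rfl, ⟨rfl, h1⟩, rfl, h2⟩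

lemma mem_P4 {x : (TTree × TTree) × (TTree × TTree)} {n : ℕ} :
    x ∈ P4 n ↔ x.1.1.avoids t73 ∧ x.1.2.avoids t73 ∧ x.2.1.avoids t73 ∧ x.2.2.avoids t73 ∧
      x.1.1.leaves + x.1.2.leaves + (x.2.1.leaves + x.2.2.leaves) = n := by
  simp only [P4, Finset.mem_biUnion, Finset.mem_product, Finset.HasAntidiagonal.mem_antidiagonal, mem_P2, Prod.exists]
  constructor
  · rintro ⟨i, j, rfl, ⟨h1, h2, rfl⟩, h3, h4, rfl⟩
    exact ⟨h1, h2, h3, h4, rfl⟩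
  · rintro ⟨h1, h2, h3, h4, rfl⟩
    exact ⟨_, _, rfl, ⟨h1, h2, rfl⟩, h3, h4, rfl⟩

lemma card_biUnion_aux {α : Type*} [DecidableEq α] (f g : ℕ → Finset α) (w : α → ℕ)
    (hf : ∀ i a, a ∈ f i → w a = i) (hg : ∀ i a, a ∈ g i → w a = i) (n : ℕ) :
    ((antidiagonal n).biUnion fun p => f p.1 ×ˢ g p.2).card
      = ∑ p ∈ antidiagonal n, (f p.1).card * (g p.2).card := by
  rw [Finset.card_biUnion]
  · simp [Finset.card_product]
  · rintro ⟨i, j⟩ hp ⟨k, l⟩ hq hpq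
    simp only [Finset.mem_coe, Finset.HasAntidiagonal.mem_antidiagonal] at hp hq
    simp only [Finset.disjoint_left, Finset.mem_product]
    rintro ⟨a, b⟩ ⟨ha, hb⟩ ⟨ha', hb'⟩
    have : i = k := (hf i a ha).symm.trans (hf k a ha')
    exact hpq (by simp only [Prod.mk.injEq]; omega)

lemma avoids_L : TTree.L.avoids t73 := by
  intro h
  simp [TTree.contains, TTree.occursAtRoot, t73] at h

lemma avoids_N_iff {a b c : TTree} :
    (TTree.N a b c).avoids t73 ↔
      ¬ TTree.occursAtRoot t73 (.N a b c) ∧ a.avoids t73 ∧ b.avoids t73 ∧ c.avoids t73 := by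
  simp only [TTree.avoids, TTree.contains]
  tauto

lemma occ_iff {a b c : TTree} :
    TTree.occursAtRoot t73 (.N a b c) ↔ ∃ b1 c1 x y z, a = .N (.N x y z) b1 c1 := by
  rcases a with _ | ⟨a1, b1, c1⟩
  · simp [t73, TTree.occursAtRoot]
  · rcases a1 with _ | ⟨x, y, z⟩
    · simp [t73, TTree.occursAtRoot]
    · simp [t73, TTree.occursAtRoot]

lemma avoids_NL {b c : TTree} :
    (TTree.N .L b c).avoids t73 ↔ b.avoids t73 ∧ c.avoids t73 := by
  rw [avoids_N_iff, occ_iff]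
  simp [avoids_L]

lemma avoids_NNL {b1 c1 b c : TTree} :
    (TTree.N (.N .L b1 c1) b c).avoids t73 ↔
      b1.avoids t73 ∧ c1.avoids t73 ∧ b.avoids t73 ∧ c.avoids t73 := by
  rw [avoids_N_iff, occ_iff, avoids_NL]
  simp
  tauto

def e2 (p : TTree × TTree) : TTree := .N .L p.1 p.2
def e4 (p : (TTree × TTree) × (TTree × TTree)) : TTree := .N (.N .L p.1.1 p.1.2) p.2.1 p.2.2

lemma F_succ (n : ℕ) :
    F (n + 1) = (if n = 0 then ({TTree.L} : Finset TTree) else ∅)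
      ∪ (P2 n).image e2 ∪ (P4 n).image e4 := by
  ext T
  simp only [Finset.mem_union, Finset.mem_image, mem_F, mem_P2, mem_P4, Prod.exists, e2, e4]
  constructor
  · rintro ⟨hl, hav⟩
    rcases T with _ | ⟨a, b, c⟩
    · simp [TTree.leaves] at hl
      subst hl
      simp
    · rw [avoids_N_iff, occ_iff] at hav
      obtain ⟨hocc, ha, hb, hc⟩ := hav
      rcases a with _ | ⟨a1, b1, c1⟩
      · refine Or.inl (Or.inr ⟨b, c, ⟨hb, hc, ?_⟩, rfl⟩)
        simp [TTree.leaves] at hl ⊢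
        omega
      · rcases a1 with _ | ⟨x, y, z⟩
        · rw [avoids_NL] at ha
          refine Or.inr ⟨b1, c1, b, c, ⟨ha.1, ha.2, hb, hc, ?_⟩, rfl⟩
          simp [TTree.leaves] at hl ⊢
          omega
        · exact absurd ⟨_, _, _, _, _, rfl⟩ hocc
  · rintro ((h | ⟨b, c, ⟨hb, hc, hs⟩, rfl⟩) | ⟨b1, c1, b, c, ⟨h1, h2, h3, h4, hs⟩, rfl⟩)
    · rcases Nat.eq_zero_or_pos n with rfl | hn
      · simp at h
        subst h
        exact ⟨rfl, avoids_L⟩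
      · simp [Nat.pos_iff_ne_zero.mp hn] at h
    · exact ⟨by simp [TTree.leaves]; omega, avoids_NL.mpr ⟨hb, hc⟩⟩
    · exact ⟨by simp [TTree.leaves]; omega, avoids_NNL.mpr ⟨h1, h2, h3, h4⟩⟩

lemma card_F_succ (n : ℕ) :
    (F (n + 1)).card = (if n = 0 then 1 else 0) + (P2 n).card + (P4 n).card := by
  rw [F_succ]
  rw [Finset.card_union_of_disjoint, Finset.card_union_of_disjoint]
  · have h2 : (P2 n).card = ((P2 n).image e2).card :=
      (Finset.card_image_of_injective _ (fun p q h => by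
        cases p; cases q; simpa [e2, TTree.N.injEq, Prod.ext_iff] using h)).symm
    have h4 : (P4 n).card = ((P4 n).image e4).card :=
      (Finset.card_image_of_injective _ (fun p q h => by
        obtain ⟨⟨_,_⟩,_,_⟩ := p; obtain ⟨⟨_,_⟩,_,_⟩ := q
        simpa [e4, TTree.N.injEq, Prod.ext_iff] using h)).symm
    rw [← h2, ← h4]
    congr 1
    split <;> simp
  · simp only [Finset.disjoint_left, Finset.mem_image]
    rintro T h ⟨p, hp, rfl⟩
    split at h <;> simp_all [e2]
  · simp only [Finset.disjoint_left, Finset.mem_union, Finset.mem_image]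
    rintro T h ⟨p, hp, rfl⟩
    rcases h with h | ⟨q, hq, hh⟩
    · split at h <;> simp_all [e4]
    · obtain ⟨⟨_,_⟩,_,_⟩ := p
      simp [e2, e4] at hh

lemma card_P2_eq (n : ℕ) :
    (P2 n).card = ∑ p ∈ antidiagonal n, (F p.1).card * (F p.2).card :=
  card_biUnion_aux F F TTree.leaves (fun _ _ h => (mem_F.mp h).1)
    (fun _ _ h => (mem_F.mp h).1) n

lemma card_P4_eq (n : ℕ) :
    (P4 n).card = ∑ p ∈ antidiagonal n, (P2 p.1).card * (P2 p.2).card :=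
  card_biUnion_aux P2 P2 (fun p => p.1.leaves + p.2.leaves)
    (fun _ _ h => (mem_P2.mp h).2.2) (fun _ _ h => (mem_P2.mp h).2.2) n

lemma av_zero : av t73 0 = 0 := by
  rw [av_eq]
  simp [F, treesLe]


open PowerSeries in
/-- The generating function `G(x) = Σ av_{t73}(n) xⁿ` satisfies
`x·G(x)⁴ + x·G(x)² − G(x) + x = 0`. -/
theorem av_t73_gf :
    let G : PowerSeries ℚ := PowerSeries.mk fun n => (av t73 n : ℚ)
    X * G ^ 4 + X * G ^ 2 - G + X = 0 := by
  intro G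
  have hG : ∀ k, coeff k G = ((F k).card : ℚ) := by
    intro k
    simp [G, coeff_mk, av_eq]
  have h2 : ∀ k, coeff k (G ^ 2) = ((P2 k).card : ℚ) := by
    intro k
    rw [sq, coeff_mul, card_P2_eq]
    push_cast
    simp [hG]
  have h4 : ∀ k, coeff k (G ^ 4) = ((P4 k).card : ℚ) := by
    intro k
    have : G ^ 4 = G ^ 2 * G ^ 2 := by ring
    rw [this, coeff_mul, card_P4_eq]
    push_cast
    simp [h2]
  ext n
  simp only [map_add, map_sub, map_zero, coeff_X]
  rcases n with _ | n
  · simp [coeff_zero_X_mul, hG, av_zero]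
    simp [F, treesLe]
  · rw [coeff_succ_X_mul, coeff_succ_X_mul, h2, h4, hG, card_F_succ n]
    push_cast
    by_cases hn : n = 0 <;> simp [hn] <;> ring
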